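/- A horizontal composition of 2-paths is rank-2 homotopic to its two whiskered vertical decompositions: let h₁, h₂ be 2-paths in M such that the single point h₁(ℝ×{1}) equals the single point h₂(ℝ×{0}); then h₁∘h₂ is rank-2 homotopic to the vertical composite (h₁∘h₂(0,·))·(h₁(1,·)∘h₂) (right whiskering of h₁ with the 1-path h₂(0,·), followed vertically by left whiskering of h₂ with the 1-path h₁(1,·)), and h₁∘h₂ is also rank-2 homotopic to (h₁(0,·)∘h₂)·(h₁∘h₂(1,·)). -/

import Mathlib

open scoped Manifold

variable (E : Type*) [NormedAddCommGroup E] [NormedSpace ℝ E] [FiniteDimensional ℝ E]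
variable {M : Type*} [TopologicalSpace M] [ChartedSpace E M]
  [IsManifold 𝓘(ℝ, E) (⊤ : ℕ∞) M]

/-- A 1-path in `M`: a smooth map `ℝ → M` that is constant near `(-∞, 0]` and near
`[1, ∞)` (in the sense of the `ε`-conditions). -/
def IsOnePath (γ : ℝ → M) : Prop :=
  ContMDiff 𝓘(ℝ, ℝ) 𝓘(ℝ, E) (⊤ : ℕ∞) γ ∧
    ∃ ε > (0 : ℝ), (∀ t ≤ ε, γ t = γ 0) ∧ (∀ t, 1 - ε ≤ t → γ t = γ 1)

/-- A 2-path in `M`, as a smooth map `ℝ × ℝ → M` with coordinates `(s, t)`,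
constant near the boundary in each variable, whose images at `t = 0` and `t = 1`
are single points. -/
def IsTwoPath (g : ℝ × ℝ → M) : Prop :=
  ContMDiff 𝓘(ℝ, ℝ × ℝ) 𝓘(ℝ, E) (⊤ : ℕ∞) g ∧
    (∃ ε > (0 : ℝ),
      (∀ s t, s ≤ ε → g (s, t) = g (0, t)) ∧
      (∀ s t, 1 - ε ≤ s → g (s, t) = g (1, t)) ∧
      (∀ s t, t ≤ ε → g (s, t) = g (s, 0)) ∧
      (∀ s t, 1 - ε ≤ t → g (s, t) = g (s, 1))) ∧
    (∀ s s', g (s, 0) = g (s', 0)) ∧ (∀ s s', g (s, 1) = g (s', 1))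

/-- A rank-1 homotopy: a 2-path whose differential has rank at most 1 at every point. -/
def IsRank1Homotopy (h : ℝ × ℝ → M) : Prop :=
  IsTwoPath E h ∧
    ∀ p : ℝ × ℝ,
      Module.finrank ℝ
        (LinearMap.range (mfderiv 𝓘(ℝ, ℝ × ℝ) 𝓘(ℝ, E) h p).toLinearMap) ≤ 1

/-- Two 1-paths are rank-1 homotopic if they are joined by a rank-1 homotopy. -/
def Rank1Homotopic (γ γ' : ℝ → M) : Prop :=
  ∃ h : ℝ × ℝ → M, IsRank1Homotopy E h ∧ (∀ t, h (0, t) = γ t) ∧ (∀ t, h (1, t) = γ' t)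

/-- A 3-path in `M`, as a smooth map `ℝ × ℝ × ℝ → M` with coordinates `(r, s, t)`. -/
def IsThreePath (α : ℝ × ℝ × ℝ → M) : Prop :=
  ContMDiff 𝓘(ℝ, ℝ × ℝ × ℝ) 𝓘(ℝ, E) (⊤ : ℕ∞) α ∧
    (∃ ε > (0 : ℝ),
      (∀ r s t, r ≤ ε → α (r, s, t) = α (0, s, t)) ∧
      (∀ r s t, 1 - ε ≤ r → α (r, s, t) = α (1, s, t)) ∧
      (∀ r s t, s ≤ ε → α (r, s, t) = α (r, 0, t)) ∧
      (∀ r s t, 1 - ε ≤ s → α (r, s, t) = α (r, 1, t)) ∧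
      (∀ r s t, t ≤ ε → α (r, s, t) = α (r, s, 0)) ∧
      (∀ r s t, 1 - ε ≤ t → α (r, s, t) = α (r, s, 1))) ∧
    (∀ r s r' s', α (r, s, 0) = α (r', s', 0)) ∧
    (∀ r s r' s', α (r, s, 1) = α (r', s', 1))

/-- A rank-2 homotopy: a 3-path whose differential has rank at most 2 at every point and
whose restrictions to `s = 0` and `s = 1` are rank-1 homotopies. -/
def IsRank2Homotopy (α : ℝ × ℝ × ℝ → M) : Prop :=
  IsThreePath E α ∧
    (∀ p : ℝ × ℝ × ℝ,
      Module.finrank ℝ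
        (LinearMap.range (mfderiv 𝓘(ℝ, ℝ × ℝ × ℝ) 𝓘(ℝ, E) α p).toLinearMap) ≤ 2) ∧
    IsRank1Homotopy E (fun p : ℝ × ℝ => α (p.1, 0, p.2)) ∧
    IsRank1Homotopy E (fun p : ℝ × ℝ => α (p.1, 1, p.2))

/-- `α` is a rank-2 homotopy from the 2-path `g` to the 2-path `g'`. -/
def Rank2HomotopyFrom (α : ℝ × ℝ × ℝ → M) (g g' : ℝ × ℝ → M) : Prop :=
  IsRank2Homotopy E α ∧ (∀ s t, α (0, s, t) = g (s, t)) ∧ (∀ s t, α (1, s, t) = g' (s, t))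

/-- Two 2-paths are rank-2 homotopic if they are joined by a rank-2 homotopy. -/
def Rank2Homotopic (g g' : ℝ × ℝ → M) : Prop :=
  ∃ α : ℝ × ℝ × ℝ → M, Rank2HomotopyFrom E α g g'

/-- Vertical composition of 2-paths. -/
noncomputable def vertComp (g h : ℝ × ℝ → M) : ℝ × ℝ → M := fun p =>
  if p.1 ≤ 1 / 2 then g (2 * p.1, p.2) else h (2 * p.1 - 1, p.2)

/-- Horizontal composition of 2-paths. -/
noncomputable def horizComp (g h : ℝ × ℝ → M) : ℝ × ℝ → M := fun p =>
  if p.2 ≤ 1 / 2 then g (p.1, 2 * p.2) else h (p.1, 2 * p.2 - 1)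

/-- Left whiskering of a 2-path `g` with a 1-path `γ`. -/
noncomputable def leftWhisker (γ : ℝ → M) (g : ℝ × ℝ → M) : ℝ × ℝ → M := fun p =>
  if p.2 ≤ 1 / 2 then γ (2 * p.2) else g (p.1, 2 * p.2 - 1)

/-- Right whiskering of a 2-path `g` with a 1-path `γ`. -/
noncomputable def rightWhisker (g : ℝ × ℝ → M) (γ : ℝ → M) : ℝ × ℝ → M := fun p =>
  if p.2 ≤ 1 / 2 then g (p.1, 2 * p.2) else γ (2 * p.2 - 1)


attribute [fun_prop] Real.smoothTransition.contDiff

noncomputable def sclampF (ε x : ℝ) : ℝ := x * Real.smoothTransition (x / ε)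

@[fun_prop] lemma sclampF_contDiff {ε : ℝ} (hε : ε ≠ 0) : ContDiff ℝ (⊤ : ℕ∞) (sclampF ε) := by
  unfold sclampF; fun_prop (disch := intros; assumption)

lemma sclampF_of_nonpos {ε x : ℝ} (hε : 0 < ε) (hx : x ≤ 0) : sclampF ε x = 0 := by
  unfold sclampF
  rw [Real.smoothTransition.zero_of_nonpos (div_nonpos_of_nonpos_of_nonneg hx hε.le), mul_zero]

lemma sclampF_of_ge {ε x : ℝ} (hε : 0 < ε) (hx : ε ≤ x) : sclampF ε x = x := by
  unfold sclampF
  rw [Real.smoothTransition.one_of_one_le ((one_le_div hε).mpr hx), mul_one]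

lemma sclampF_nonneg {ε x : ℝ} (hε : 0 < ε) : 0 ≤ sclampF ε x := by
  rcases le_or_gt x 0 with h | h
  · rw [sclampF_of_nonpos hε h]
  · exact mul_nonneg h.le (Real.smoothTransition.nonneg _)

lemma sclampF_le_max {ε x : ℝ} (hε : 0 < ε) : sclampF ε x ≤ max x 0 := by
  rcases le_or_gt x 0 with h | h
  · rw [sclampF_of_nonpos hε h]; exact le_max_right _ _
  · refine le_trans ?_ (le_max_left _ _)
    calc x * Real.smoothTransition (x / ε) ≤ x * 1 :=
      mul_le_mul_of_nonneg_left (Real.smoothTransition.le_one _) h.le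
    _ = x := mul_one x

lemma sclampF_le {ε x : ℝ} (hε : 0 < ε) (hx : x ≤ ε) : sclampF ε x ≤ ε :=
  (sclampF_le_max hε).trans (max_le hx hε.le)

noncomputable def thetaF (r : ℝ) : ℝ := Real.smoothTransition (3 * r - 1)

@[fun_prop] lemma thetaF_contDiff : ContDiff ℝ (⊤ : ℕ∞) thetaF := by
  unfold thetaF; fun_prop

lemma thetaF_zero {r : ℝ} (hr : r ≤ 1/3) : thetaF r = 0 :=
  Real.smoothTransition.zero_of_nonpos (by linarith)

lemma thetaF_one {r : ℝ} (hr : 2/3 ≤ r) : thetaF r = 1 :=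
  Real.smoothTransition.one_of_one_le (by linarith)

lemma thetaF_nonneg (r : ℝ) : 0 ≤ thetaF r := Real.smoothTransition.nonneg _
lemma thetaF_le_one (r : ℝ) : thetaF r ≤ 1 := Real.smoothTransition.le_one _

noncomputable def rhoF (ε x : ℝ) : ℝ := x - sclampF ε (x - (1 - ε))

@[fun_prop] lemma rhoF_contDiff {ε : ℝ} (hε : ε ≠ 0) : ContDiff ℝ (⊤ : ℕ∞) (rhoF ε) := by
  unfold rhoF; fun_prop (disch := intros; assumption)

lemma rhoF_of_le {ε x : ℝ} (hε : 0 < ε) (hx : x ≤ 1 - ε) : rhoF ε x = x := by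
  unfold rhoF
  rw [sclampF_of_nonpos hε (by linarith), sub_zero]

lemma rhoF_ge {ε x : ℝ} (hε : 0 < ε) (hx : 1 - ε ≤ x) : 1 - ε ≤ rhoF ε x := by
  have := sclampF_le_max (ε := ε) (x := x - (1 - ε)) hε
  have h2 : max (x - (1 - ε)) 0 = x - (1 - ε) := max_eq_left (by linarith)
  unfold rhoF; rw [h2] at this; linarith

lemma convex_upper {t a b ε : ℝ} (ht0 : 0 ≤ t) (ht1 : t ≤ 1) (ha : a ≤ ε) (hb : b ≤ ε) :
    (1 - t) * a + t * b ≤ ε := by nlinarith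

lemma convex_lower {t a b c : ℝ} (ht0 : 0 ≤ t) (ht1 : t ≤ 1) (ha : c ≤ a) (hb : c ≤ b) :
    c ≤ (1 - t) * a + t * b := by nlinarith

noncomputable def phiF (ε : ℝ) (p : ℝ × ℝ) : ℝ :=
  (1 - thetaF p.1) * p.2 + thetaF p.1 * rhoF ε (2 * p.2)

noncomputable def psiF (ε : ℝ) (p : ℝ × ℝ) : ℝ :=
  (1 - thetaF p.1) * p.2 + thetaF p.1 * sclampF ε (2 * p.2 - 1)

@[fun_prop] lemma phiF_contDiff {ε : ℝ} (hε : ε ≠ 0) : ContDiff ℝ (⊤ : ℕ∞) (phiF ε) := by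
  unfold phiF; fun_prop (disch := intros; assumption)

@[fun_prop] lemma psiF_contDiff {ε : ℝ} (hε : ε ≠ 0) : ContDiff ℝ (⊤ : ℕ∞) (psiF ε) := by
  unfold psiF; fun_prop (disch := intros; assumption)


section AuxRank

lemma rank_le_of_eventuallyEq_comp
    {X Y : Type*} [NormedAddCommGroup X] [NormedSpace ℝ X] [FiniteDimensional ℝ X]
    [NormedAddCommGroup Y] [NormedSpace ℝ Y] [FiniteDimensional ℝ Y]
    {g : Y → M} {f : X → Y} {φ : X → M}
    (hg : ContMDiff 𝓘(ℝ, Y) 𝓘(ℝ, E) (⊤ : ℕ∞) g) (hf : ContDiff ℝ (⊤ : ℕ∞) f)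
    (p : X) (hev : φ =ᶠ[nhds p] (g ∘ f)) :
    Module.finrank ℝ (LinearMap.range (mfderiv 𝓘(ℝ, X) 𝓘(ℝ, E) φ p).toLinearMap)
      ≤ Module.finrank ℝ Y := by
  rw [hev.mfderiv_eq, mfderiv_comp p (hg.mdifferentiableAt (by simp))
    ((contMDiff_iff_contDiff.mpr hf).mdifferentiableAt (by simp))]
  set A : Y →L[ℝ] E := mfderiv 𝓘(ℝ, Y) 𝓘(ℝ, E) g (f p) with hA
  set B : X →L[ℝ] Y := mfderiv 𝓘(ℝ, X) 𝓘(ℝ, Y) f p with hB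
  calc Module.finrank ℝ (LinearMap.range ((A.comp B)).toLinearMap)
      = Module.finrank ℝ (Submodule.map (A.toLinearMap) (LinearMap.range B.toLinearMap)) := by
        rw [ContinuousLinearMap.toLinearMap_comp, LinearMap.range_comp]
    _ ≤ Module.finrank ℝ (LinearMap.range B.toLinearMap) := Submodule.finrank_map_le _ _
    _ ≤ Module.finrank ℝ Y := Submodule.finrank_le _

lemma isRank1Homotopy_snd (β : ℝ → M)
    (hβ : ContMDiff 𝓘(ℝ, ℝ) 𝓘(ℝ, E) (⊤ : ℕ∞) β)
    {ε' : ℝ} (hε' : 0 < ε')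
    (hb : ∀ t, t ≤ ε' → β t = β 0) (ht : ∀ t, 1 - ε' ≤ t → β t = β 1) :
    IsRank1Homotopy E (fun p : ℝ × ℝ => β p.2) := by
  constructor
  · refine ⟨hβ.comp (contMDiff_iff_contDiff.mpr (by fun_prop)), ⟨ε', hε', ?_, ?_, ?_, ?_⟩, ?_, ?_⟩
    · intro s t _; rfl
    · intro s t _; rfl
    · intro s t h; exact hb t h
    · intro s t h; exact ht t h
    · intro s s'; rfl
    · intro s s'; rfl
  · intro p
    have h1 : Module.finrank ℝ ℝ = 1 := Module.finrank_self ℝ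
    refine le_trans (rank_le_of_eventuallyEq_comp E hβ contDiff_snd p ?_) (le_of_eq h1)
    exact Filter.Eventually.of_forall (fun q => rfl)

lemma aux_rank2 (h₁ h₂ : ℝ × ℝ → M)
    (hs₁ : ContMDiff 𝓘(ℝ, ℝ × ℝ) 𝓘(ℝ, E) (⊤ : ℕ∞) h₁)
    (hs₂ : ContMDiff 𝓘(ℝ, ℝ × ℝ) 𝓘(ℝ, E) (⊤ : ℕ∞) h₂)
    {ε : ℝ} (hε : 0 < ε) (hε3 : ε ≤ 1/3)
    (h₁l : ∀ s t, s ≤ ε → h₁ (s, t) = h₁ (0, t))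
    (h₁r : ∀ s t, 1 - ε ≤ s → h₁ (s, t) = h₁ (1, t))
    (h₁b : ∀ s t, t ≤ ε → h₁ (s, t) = h₁ (s, 0))
    (h₁t : ∀ s t, 1 - ε ≤ t → h₁ (s, t) = h₁ (s, 1))
    (h₁p0 : ∀ s s', h₁ (s, 0) = h₁ (s', 0))
    (h₁p1 : ∀ s s', h₁ (s, 1) = h₁ (s', 1))
    (h₂l : ∀ s t, s ≤ ε → h₂ (s, t) = h₂ (0, t))
    (h₂r : ∀ s t, 1 - ε ≤ s → h₂ (s, t) = h₂ (1, t))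
    (h₂b : ∀ s t, t ≤ ε → h₂ (s, t) = h₂ (s, 0))
    (h₂t : ∀ s t, 1 - ε ≤ t → h₂ (s, t) = h₂ (s, 1))
    (h₂p0 : ∀ s s', h₂ (s, 0) = h₂ (s', 0))
    (h₂p1 : ∀ s s', h₂ (s, 1) = h₂ (s', 1))
    (hmatch : h₁ (0, 1) = h₂ (0, 0))
    (u v : ℝ × ℝ → ℝ) (hu : ContDiff ℝ (⊤ : ℕ∞) u) (hv : ContDiff ℝ (⊤ : ℕ∞) v)
    (hr0 : ∀ r s, r ≤ ε/2 → u (r, s) = u (0, s) ∧ v (r, s) = v (0, s))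
    (hr1 : ∀ r s, 1 - ε/2 ≤ r → u (r, s) = u (1, s) ∧ v (r, s) = v (1, s))
    (hsl : ∀ r s, s ≤ ε/2 → u (r, s) ≤ ε ∧ v (r, s) ≤ ε)
    (hsr : ∀ r s, 1 - ε/2 ≤ s → 1 - ε ≤ u (r, s) ∧ 1 - ε ≤ v (r, s)) :
    IsRank2Homotopy E (fun p : ℝ × ℝ × ℝ =>
      if p.2.2 ≤ 1/2 then h₁ (u (p.1, p.2.1), 2 * p.2.2)
        else h₂ (v (p.1, p.2.1), 2 * p.2.2 - 1)) := by
  have kc₁ : ∀ w x, 1 - ε ≤ x → h₁ (w, x) = h₂ (0, 0) := fun w x hx =>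
    ((h₁t w x hx).trans (h₁p1 w 0)).trans hmatch
  have kc₂ : ∀ w x, x ≤ ε → h₂ (w, x) = h₂ (0, 0) := fun w x hx =>
    (h₂b w x hx).trans (h₂p0 w 0)
  set αf : ℝ × ℝ × ℝ → M := fun p =>
      if p.2.2 ≤ 1/2 then h₁ (u (p.1, p.2.1), 2 * p.2.2)
        else h₂ (v (p.1, p.2.1), 2 * p.2.2 - 1) with hαf
  have hαt : ∀ r s t, t ≤ 1/2 → αf (r, s, t) = h₁ (u (r, s), 2 * t) := by
    intro r s t h; simp only [hαf]; rw [if_pos h]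
  have hαt' : ∀ r s t, ¬ (t ≤ 1/2) → αf (r, s, t) = h₂ (v (r, s), 2 * t - 1) := by
    intro r s t h; simp only [hαf]; rw [if_neg h]
  have hU : ∀ p : ℝ × ℝ × ℝ, p.2.2 < 1/2 + ε/4 → αf p = h₁ (u (p.1, p.2.1), 2 * p.2.2) := by
    intro p hp
    by_cases h : p.2.2 ≤ 1/2
    · exact hαt _ _ _ h
    · push_neg at h
      rw [hαt' _ _ _ (not_le.mpr h), kc₂ _ _ (by linarith),
        kc₁ (u (p.1, p.2.1)) (2 * p.2.2) (by linarith)]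
  have hV : ∀ p : ℝ × ℝ × ℝ, 1/2 - ε/4 < p.2.2 →
      αf p = h₂ (v (p.1, p.2.1), 2 * p.2.2 - 1) := by
    intro p hp
    by_cases h : p.2.2 ≤ 1/2
    · rw [hαt _ _ _ h, kc₁ _ _ (by linarith),
        kc₂ (v (p.1, p.2.1)) (2 * p.2.2 - 1) (by linarith)]
    · exact hαt' _ _ _ h
  have hFc : ContDiff ℝ (⊤ : ℕ∞) (fun p : ℝ × ℝ × ℝ => (u (p.1, p.2.1), 2 * p.2.2)) := by
    fun_prop
  have hGc : ContDiff ℝ (⊤ : ℕ∞) (fun p : ℝ × ℝ × ℝ => (v (p.1, p.2.1), 2 * p.2.2 - 1)) := by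
    fun_prop
  have hUopen : IsOpen {p : ℝ × ℝ × ℝ | p.2.2 < 1/2 + ε/4} :=
    isOpen_lt (by fun_prop) continuous_const
  have hVopen : IsOpen {p : ℝ × ℝ × ℝ | 1/2 - ε/4 < p.2.2} :=
    isOpen_lt continuous_const (by fun_prop)
  have hevU : ∀ p : ℝ × ℝ × ℝ, p.2.2 < 1/2 + ε/4 →
      αf =ᶠ[nhds p] (h₁ ∘ fun q : ℝ × ℝ × ℝ => (u (q.1, q.2.1), 2 * q.2.2)) :=
    fun p hp => Filter.eventuallyEq_of_mem (hUopen.mem_nhds hp) (fun q hq => hU q hq)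
  have hevV : ∀ p : ℝ × ℝ × ℝ, 1/2 - ε/4 < p.2.2 →
      αf =ᶠ[nhds p] (h₂ ∘ fun q : ℝ × ℝ × ℝ => (v (q.1, q.2.1), 2 * q.2.2 - 1)) :=
    fun p hp => Filter.eventuallyEq_of_mem (hVopen.mem_nhds hp) (fun q hq => hV q hq)
  have hcase : ∀ p : ℝ × ℝ × ℝ, p.2.2 < 1/2 + ε/4 ∨ 1/2 - ε/4 < p.2.2 := by
    intro p; rcases le_or_gt p.2.2 (1/2) with h | h
    · left; linarith
    · right; linarith
  have hsm : ContMDiff 𝓘(ℝ, ℝ × ℝ × ℝ) 𝓘(ℝ, E) (⊤ : ℕ∞) αf := by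
    intro p
    rcases hcase p with h | h
    · exact ((hs₁.comp (contMDiff_iff_contDiff.mpr hFc)) p).congr_of_eventuallyEq (hevU p h)
    · exact ((hs₂.comp (contMDiff_iff_contDiff.mpr hGc)) p).congr_of_eventuallyEq (hevV p h)
  have hrank : ∀ p : ℝ × ℝ × ℝ,
      Module.finrank ℝ
        (LinearMap.range (mfderiv 𝓘(ℝ, ℝ × ℝ × ℝ) 𝓘(ℝ, E) αf p).toLinearMap) ≤ 2 := by
    have h2 : Module.finrank ℝ (ℝ × ℝ) = 2 := by simp
    intro p
    rcases hcase p with h | h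
    · exact le_trans (rank_le_of_eventuallyEq_comp E hs₁ hFc p (hevU p h)) (le_of_eq h2)
    · exact le_trans (rank_le_of_eventuallyEq_comp E hs₂ hGc p (hevV p h)) (le_of_eq h2)
  have half : (0:ℝ) ≤ 1/2 := by norm_num
  have nhalf : ¬ ((1:ℝ) ≤ 1/2) := by norm_num
  have hβsm : ∀ a : ℝ, ContMDiff 𝓘(ℝ, ℝ) 𝓘(ℝ, E) (⊤ : ℕ∞) (fun t => αf (0, a, t)) := by
    intro a
    exact hsm.comp (contMDiff_iff_contDiff.mpr
      (by fun_prop : ContDiff ℝ (⊤ : ℕ∞) (fun t : ℝ => ((0:ℝ), a, t))))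
  have hβb : ∀ r a t : ℝ, t ≤ ε/4 → αf (r, a, t) = αf (r, a, 0) := by
    intro r a t htle
    rw [hαt _ _ _ (by linarith), hαt _ _ _ half, show (2:ℝ) * 0 = 0 by ring,
      h₁b _ _ (by linarith)]
  have hβt : ∀ r a t : ℝ, 1 - ε/4 ≤ t → αf (r, a, t) = αf (r, a, 1) := by
    intro r a t htge
    rw [hαt' _ _ _ (not_le.mpr (by linarith)), hαt' _ _ _ nhalf,
      show (2:ℝ) * 1 - 1 = 1 by ring, h₂t _ _ (by linarith)]
  have hres0 : (fun q : ℝ × ℝ => αf (q.1, 0, q.2)) = (fun q : ℝ × ℝ => αf (0, 0, q.2)) := by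
    funext q
    by_cases h : q.2 ≤ 1/2
    · rw [hαt _ _ _ h, hαt _ _ _ h, h₁l _ _ (hsl q.1 0 (by linarith)).1,
        h₁l _ _ (hsl 0 0 (by linarith)).1]
    · rw [hαt' _ _ _ h, hαt' _ _ _ h, h₂l _ _ (hsl q.1 0 (by linarith)).2,
        h₂l _ _ (hsl 0 0 (by linarith)).2]
  have hres1 : (fun q : ℝ × ℝ => αf (q.1, 1, q.2)) = (fun q : ℝ × ℝ => αf (0, 1, q.2)) := by
    funext q
    by_cases h : q.2 ≤ 1/2
    · rw [hαt _ _ _ h, hαt _ _ _ h, h₁r _ _ (hsr q.1 1 (by linarith)).1,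
        h₁r _ _ (hsr 0 1 (by linarith)).1]
    · rw [hαt' _ _ _ h, hαt' _ _ _ h, h₂r _ _ (hsr q.1 1 (by linarith)).2,
        h₂r _ _ (hsr 0 1 (by linarith)).2]
  refine ⟨⟨hsm, ⟨ε/4, by linarith, ?_, ?_, ?_, ?_, ?_, ?_⟩, ?_, ?_⟩, hrank, ?_, ?_⟩
  · intro r s t hr
    by_cases h : t ≤ 1/2
    · rw [hαt _ _ _ h, hαt _ _ _ h, (hr0 r s (by linarith)).1]
    · rw [hαt' _ _ _ h, hαt' _ _ _ h, (hr0 r s (by linarith)).2]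
  · intro r s t hr
    by_cases h : t ≤ 1/2
    · rw [hαt _ _ _ h, hαt _ _ _ h, (hr1 r s (by linarith)).1]
    · rw [hαt' _ _ _ h, hαt' _ _ _ h, (hr1 r s (by linarith)).2]
  · intro r s t hs
    by_cases h : t ≤ 1/2
    · rw [hαt _ _ _ h, hαt _ _ _ h, h₁l _ _ (hsl r s (by linarith)).1,
        h₁l _ _ (hsl r 0 (by linarith)).1]
    · rw [hαt' _ _ _ h, hαt' _ _ _ h, h₂l _ _ (hsl r s (by linarith)).2,
        h₂l _ _ (hsl r 0 (by linarith)).2]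
  · intro r s t hs
    by_cases h : t ≤ 1/2
    · rw [hαt _ _ _ h, hαt _ _ _ h, h₁r _ _ (hsr r s (by linarith)).1,
        h₁r _ _ (hsr r 1 (by linarith)).1]
    · rw [hαt' _ _ _ h, hαt' _ _ _ h, h₂r _ _ (hsr r s (by linarith)).2,
        h₂r _ _ (hsr r 1 (by linarith)).2]
  · intro r s t ht
    exact hβb r s t ht
  · intro r s t ht
    exact hβt r s t ht
  · intro r s r' s'
    rw [hαt _ _ _ half, hαt _ _ _ half, show (2:ℝ) * 0 = 0 by ring]
    exact h₁p0 _ _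
  · intro r s r' s'
    rw [hαt' _ _ _ nhalf, hαt' _ _ _ nhalf, show (2:ℝ) * 1 - 1 = 1 by ring]
    exact h₂p1 _ _
  · rw [hres0]
    exact isRank1Homotopy_snd E (fun t => αf (0, 0, t)) (hβsm 0)
      (show (0:ℝ) < ε/4 by linarith) (fun t htle => hβb 0 0 t htle)
      (fun t htge => hβt 0 0 t htge)
  · rw [hres1]
    exact isRank1Homotopy_snd E (fun t => αf (0, 1, t)) (hβsm 1)
      (show (0:ℝ) < ε/4 by linarith) (fun t htle => hβb 0 1 t htle)
      (fun t htge => hβt 0 1 t htge)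

end AuxRank

section PhiPsi

lemma phiF_zero (ε s : ℝ) : phiF ε (0, s) = s := by
  unfold phiF
  rw [thetaF_zero (by norm_num : (0:ℝ) ≤ 1/3)]; ring

lemma psiF_zero (ε s : ℝ) : psiF ε (0, s) = s := by
  unfold psiF
  rw [thetaF_zero (by norm_num : (0:ℝ) ≤ 1/3)]; ring

lemma phiF_one (ε s : ℝ) : phiF ε (1, s) = rhoF ε (2 * s) := by
  unfold phiF
  rw [thetaF_one (by norm_num : (2:ℝ)/3 ≤ 1)]; ring

lemma psiF_one (ε s : ℝ) : psiF ε (1, s) = sclampF ε (2 * s - 1) := by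
  unfold psiF
  rw [thetaF_one (by norm_num : (2:ℝ)/3 ≤ 1)]; ring

lemma phiF_r0 {ε r : ℝ} (hε3 : ε ≤ 1/3) (hr : r ≤ ε/2) (s : ℝ) :
    phiF ε (r, s) = phiF ε (0, s) := by
  unfold phiF
  rw [thetaF_zero (show r ≤ 1/3 by linarith), thetaF_zero (by norm_num : (0:ℝ) ≤ 1/3)]

lemma psiF_r0 {ε r : ℝ} (hε3 : ε ≤ 1/3) (hr : r ≤ ε/2) (s : ℝ) :
    psiF ε (r, s) = psiF ε (0, s) := by
  unfold psiF
  rw [thetaF_zero (show r ≤ 1/3 by linarith), thetaF_zero (by norm_num : (0:ℝ) ≤ 1/3)]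

lemma phiF_r1 {ε r : ℝ} (hε : 0 < ε) (hε3 : ε ≤ 1/3) (hr : 1 - ε/2 ≤ r) (s : ℝ) :
    phiF ε (r, s) = phiF ε (1, s) := by
  unfold phiF
  rw [thetaF_one (show (2:ℝ)/3 ≤ r by linarith), thetaF_one (by norm_num : (2:ℝ)/3 ≤ 1)]

lemma psiF_r1 {ε r : ℝ} (hε : 0 < ε) (hε3 : ε ≤ 1/3) (hr : 1 - ε/2 ≤ r) (s : ℝ) :
    psiF ε (r, s) = psiF ε (1, s) := by
  unfold psiF
  rw [thetaF_one (show (2:ℝ)/3 ≤ r by linarith), thetaF_one (by norm_num : (2:ℝ)/3 ≤ 1)]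

lemma phiF_sl {ε r s : ℝ} (hε : 0 < ε) (hε3 : ε ≤ 1/3) (hs : s ≤ ε/2) :
    phiF ε (r, s) ≤ ε := by
  unfold phiF
  refine convex_upper (thetaF_nonneg r) (thetaF_le_one r) (by linarith) ?_
  rw [rhoF_of_le hε (by linarith)]; linarith

lemma psiF_sl {ε r s : ℝ} (hε : 0 < ε) (hε3 : ε ≤ 1/3) (hs : s ≤ ε/2) :
    psiF ε (r, s) ≤ ε := by
  unfold psiF
  refine convex_upper (thetaF_nonneg r) (thetaF_le_one r) (by linarith) ?_
  rw [sclampF_of_nonpos hε (by linarith)]; linarith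

lemma phiF_sr {ε r s : ℝ} (hε : 0 < ε) (hε3 : ε ≤ 1/3) (hs : 1 - ε/2 ≤ s) :
    1 - ε ≤ phiF ε (r, s) := by
  unfold phiF
  exact convex_lower (thetaF_nonneg r) (thetaF_le_one r) (by linarith)
    (rhoF_ge hε (by linarith))

lemma psiF_sr {ε r s : ℝ} (hε : 0 < ε) (hε3 : ε ≤ 1/3) (hs : 1 - ε/2 ≤ s) :
    1 - ε ≤ psiF ε (r, s) := by
  unfold psiF
  refine convex_lower (thetaF_nonneg r) (thetaF_le_one r) (by linarith) ?_
  rw [sclampF_of_ge hε (by linarith)]; linarith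

end PhiPsi


/-- A horizontal composition of 2-paths is rank-2 homotopic to its two whiskered vertical
decompositions. -/
theorem horizComp_whisker_decomposition (h₁ h₂ : ℝ × ℝ → M)
    (hh₁ : IsTwoPath E h₁) (hh₂ : IsTwoPath E h₂)
    (hmatch : h₁ (0, 1) = h₂ (0, 0)) :
    Rank2Homotopic E (horizComp h₁ h₂)
      (vertComp (rightWhisker h₁ (fun t => h₂ (0, t)))
        (leftWhisker (fun t => h₁ (1, t)) h₂)) ∧
    Rank2Homotopic E (horizComp h₁ h₂)
      (vertComp (leftWhisker (fun t => h₁ (0, t)) h₂)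
        (rightWhisker h₁ (fun t => h₂ (1, t))))  := by
  obtain ⟨hs₁, ⟨ε₁, hε₁, h₁l, h₁r, h₁b, h₁t⟩, h₁p0, h₁p1⟩ := hh₁
  obtain ⟨hs₂, ⟨ε₂, hε₂, h₂l, h₂r, h₂b, h₂t⟩, h₂p0, h₂p1⟩ := hh₂
  set ε := min ε₁ (min ε₂ (1/3)) with hεdef
  have hε : 0 < ε := lt_min hε₁ (lt_min hε₂ (by norm_num))
  have hε3 : ε ≤ 1/3 := le_trans (min_le_right _ _) (min_le_right _ _)
  have hεε₁ : ε ≤ ε₁ := min_le_left _ _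
  have hεε₂ : ε ≤ ε₂ := le_trans (min_le_right _ _) (min_le_left _ _)
  have hεne : ε ≠ 0 := ne_of_gt hε
  have H₁l : ∀ s t, s ≤ ε → h₁ (s, t) = h₁ (0, t) := fun s t h => h₁l s t (le_trans h hεε₁)
  have H₁r : ∀ s t, 1 - ε ≤ s → h₁ (s, t) = h₁ (1, t) := fun s t h => h₁r s t (by linarith)
  have H₁b : ∀ s t, t ≤ ε → h₁ (s, t) = h₁ (s, 0) := fun s t h => h₁b s t (le_trans h hεε₁)
  have H₁t : ∀ s t, 1 - ε ≤ t → h₁ (s, t) = h₁ (s, 1) := fun s t h => h₁t s t (by linarith)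
  have H₂l : ∀ s t, s ≤ ε → h₂ (s, t) = h₂ (0, t) := fun s t h => h₂l s t (le_trans h hεε₂)
  have H₂r : ∀ s t, 1 - ε ≤ s → h₂ (s, t) = h₂ (1, t) := fun s t h => h₂r s t (by linarith)
  have H₂b : ∀ s t, t ≤ ε → h₂ (s, t) = h₂ (s, 0) := fun s t h => h₂b s t (le_trans h hεε₂)
  have H₂t : ∀ s t, 1 - ε ≤ t → h₂ (s, t) = h₂ (s, 1) := fun s t h => h₂t s t (by linarith)
  constructor
  · refine ⟨fun p : ℝ × ℝ × ℝ =>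
      if p.2.2 ≤ 1/2 then h₁ (phiF ε (p.1, p.2.1), 2 * p.2.2)
        else h₂ (psiF ε (p.1, p.2.1), 2 * p.2.2 - 1), ?_, ?_, ?_⟩
    · exact aux_rank2 E h₁ h₂ hs₁ hs₂ hε hε3 H₁l H₁r H₁b H₁t h₁p0 h₁p1
        H₂l H₂r H₂b H₂t h₂p0 h₂p1 hmatch (phiF ε) (psiF ε)
        (phiF_contDiff hεne) (psiF_contDiff hεne)
        (fun r s h => ⟨phiF_r0 hε3 h s, psiF_r0 hε3 h s⟩)
        (fun r s h => ⟨phiF_r1 hε hε3 h s, psiF_r1 hε hε3 h s⟩)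
        (fun r s h => ⟨phiF_sl hε hε3 h, psiF_sl hε hε3 h⟩)
        (fun r s h => ⟨phiF_sr hε hε3 h, psiF_sr hε hε3 h⟩)
    · intro s t
      simp only [horizComp, phiF_zero, psiF_zero]
    · intro s t
      simp only [vertComp, rightWhisker, leftWhisker, phiF_one, psiF_one]
      rcases le_or_gt s (1/2) with hs | hs <;> rcases le_or_gt t (1/2) with ht | ht
      · rw [if_pos ht, if_pos hs, if_pos ht]
        rcases le_or_gt (2*s) (1-ε) with h | h
        · rw [rhoF_of_le hε h]
        · rw [H₁r _ _ (rhoF_ge hε h.le), H₁r _ _ h.le]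
      · rw [if_neg (not_le.mpr ht), if_pos hs, if_neg (not_le.mpr ht)]
        exact H₂l _ _ (sclampF_le hε (by linarith))
      · rw [if_pos ht, if_neg (not_le.mpr hs), if_pos ht]
        exact H₁r _ _ (rhoF_ge hε (by linarith))
      · rw [if_neg (not_le.mpr ht), if_neg (not_le.mpr hs), if_neg (not_le.mpr ht)]
        rcases le_or_gt ε (2*s-1) with h | h
        · rw [sclampF_of_ge hε h]
        · rw [H₂l _ _ (sclampF_le hε h.le), H₂l _ _ h.le]
  · refine ⟨fun p : ℝ × ℝ × ℝ =>
      if p.2.2 ≤ 1/2 then h₁ (psiF ε (p.1, p.2.1), 2 * p.2.2)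
        else h₂ (phiF ε (p.1, p.2.1), 2 * p.2.2 - 1), ?_, ?_, ?_⟩
    · exact aux_rank2 E h₁ h₂ hs₁ hs₂ hε hε3 H₁l H₁r H₁b H₁t h₁p0 h₁p1
        H₂l H₂r H₂b H₂t h₂p0 h₂p1 hmatch (psiF ε) (phiF ε)
        (psiF_contDiff hεne) (phiF_contDiff hεne)
        (fun r s h => ⟨psiF_r0 hε3 h s, phiF_r0 hε3 h s⟩)
        (fun r s h => ⟨psiF_r1 hε hε3 h s, phiF_r1 hε hε3 h s⟩)
        (fun r s h => ⟨psiF_sl hε hε3 h, phiF_sl hε hε3 h⟩)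
        (fun r s h => ⟨psiF_sr hε hε3 h, phiF_sr hε hε3 h⟩)
    · intro s t
      simp only [horizComp, phiF_zero, psiF_zero]
    · intro s t
      simp only [vertComp, rightWhisker, leftWhisker, phiF_one, psiF_one]
      rcases le_or_gt s (1/2) with hs | hs <;> rcases le_or_gt t (1/2) with ht | ht
      · rw [if_pos ht, if_pos hs, if_pos ht]
        exact H₁l _ _ (sclampF_le hε (by linarith))
      · rw [if_neg (not_le.mpr ht), if_pos hs, if_neg (not_le.mpr ht)]
        rcases le_or_gt (2*s) (1-ε) with h | h
        · rw [rhoF_of_le hε h]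
        · rw [H₂r _ _ (rhoF_ge hε h.le), H₂r _ _ h.le]
      · rw [if_pos ht, if_neg (not_le.mpr hs), if_pos ht]
        rcases le_or_gt ε (2*s-1) with h | h
        · rw [sclampF_of_ge hε h]
        · rw [H₁l _ _ (sclampF_le hε h.le), H₁l _ _ h.le]
      · rw [if_neg (not_le.mpr ht), if_neg (not_le.mpr hs), if_neg (not_le.mpr ht)]
        exact H₂r _ _ (rhoF_ge hε (by linarith))
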